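/- arXiv:1805.00134 — 2 statements merged into one kernel-verified Lean document; each statement's English description precedes it below -/
import Mathlib

section
/- Let H be a real Hilbert space and let w : [0,∞) → H be twice continuously differentiable with (w''(z), w(z))_H ≥ 0 for all z > 0 and (w'(0), w(0))_H ≥ 0. If z ↦ ‖w(z)‖² is bounded on [0,∞), then w'(z) = 0 for all z ≥ 0. -/
open RealInnerProductSpace

/-- If `w` is `C²` with `⟪w''(z), w(z)⟫ ≥ 0` for `z > 0`, `⟪w'(0), w(0)⟫ ≥ 0`, and
`z ↦ ‖w z‖²` is bounded on `[0,∞)`, then `w'(z) = 0` for all `z ≥ 0`. -/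
theorem stmt3 {H : Type*} [NormedAddCommGroup H] [InnerProductSpace ℝ H] [CompleteSpace H]
    (w : ℝ → H) (hw : ContDiff ℝ 2 w)
    (hpos : ∀ z > (0:ℝ), ⟪deriv (deriv w) z, w z⟫ ≥ 0)
    (h0 : ⟪deriv w 0, w 0⟫ ≥ (0:ℝ))
    (M : ℝ) (hbd : ∀ z ≥ (0:ℝ), ‖w z‖ ^ 2 ≤ M) :
    ∀ z ≥ (0:ℝ), deriv w z = 0 := by
  have hd1 : Differentiable ℝ w := hw.differentiable two_ne_zero
  have hw2 : ContDiff ℝ (1 + 1) w := by exact_mod_cast hw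
  have hd2 : Differentiable ℝ (deriv w) :=
    (contDiff_succ_iff_deriv.mp hw2).2.2.differentiable one_ne_zero
  set g : ℝ → ℝ := fun t => ⟪deriv w t, w t⟫ with hg_def
  have hg' : ∀ z : ℝ, HasDerivAt g
      (⟪deriv w z, deriv w z⟫ + ⟪deriv (deriv w) z, w z⟫) z := fun z =>
    (hd2 z).hasDerivAt.inner ℝ (hd1 z).hasDerivAt
  have hgdiff : Differentiable ℝ g := fun z => (hg' z).differentiableAt
  -- g is monotone on [0, ∞)
  have hgmono : MonotoneOn g (Set.Ici 0) := by
    apply monotoneOn_of_deriv_nonneg (convex_Ici 0) hgdiff.continuous.continuousOn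
      (hgdiff.differentiableOn)
    intro x hx
    rw [interior_Ici] at hx
    rw [(hg' x).deriv]
    have := hpos x hx
    have hnn : (0:ℝ) ≤ ⟪deriv w x, deriv w x⟫ := real_inner_self_nonneg
    linarith
  have hgnonneg : ∀ z ≥ (0:ℝ), 0 ≤ g z := fun z hz =>
    le_trans h0 (hgmono Set.self_mem_Ici hz hz)
  -- g is identically 0 on [0, ∞)
  have hgzero : ∀ z ≥ (0:ℝ), g z = 0 := by
    intro z₀ hz₀
    by_contra hne
    have hc : 0 < g z₀ := lt_of_le_of_ne (hgnonneg z₀ hz₀) (Ne.symm hne)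
    set c : ℝ := 2 * g z₀ with hc_def
    have hcpos : 0 < c := by positivity
    -- consider f z = ‖w z‖² ; f' = 2 g
    set f : ℝ → ℝ := fun t => ⟪w t, w t⟫ with hf_def
    have hf' : ∀ z : ℝ, HasDerivAt f (2 * g z) z := by
      intro z
      have := (hd1 z).hasDerivAt.inner ℝ (hd1 z).hasDerivAt
      refine this.congr_deriv ?_
      rw [hg_def]
      simp [real_inner_comm]
      ring
    have hfM : ∀ z ≥ (0:ℝ), f z ≤ M := by
      intro z hz
      rw [hf_def]
      simpa [real_inner_self_eq_norm_sq] using hbd z hz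
    -- auxiliary h z = f z - c * z monotone on [z₀, ∞)
    set F : ℝ → ℝ := fun t => f t - c * t with hF_def
    have hF' : ∀ z : ℝ, HasDerivAt F (2 * g z - c) z := fun z =>
      (hf' z).sub (by simpa using (hasDerivAt_id z).const_mul c)
    have hFmono : MonotoneOn F (Set.Ici z₀) := by
      apply monotoneOn_of_deriv_nonneg (convex_Ici z₀)
        (fun z _ => ((hF' z).continuousAt.continuousWithinAt))
        (fun z _ => ((hF' z).differentiableAt.differentiableWithinAt))
      intro x hx
      rw [interior_Ici] at hx
      rw [(hF' x).deriv]
      have : g z₀ ≤ g x := hgmono hz₀ (le_trans hz₀ hx.le) hx.le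
      rw [hc_def]; linarith
    -- pick z large
    set z₁ : ℝ := z₀ + (M + 1 - f z₀) / c with hz₁_def
    have hfz₀M : f z₀ ≤ M := hfM z₀ hz₀
    have hz₁ge : z₀ ≤ z₁ := by
      rw [hz₁_def]
      have : 0 ≤ (M + 1 - f z₀) / c := div_nonneg (by linarith) hcpos.le
      linarith
    have := hFmono (Set.self_mem_Ici) hz₁ge hz₁ge
    rw [hF_def] at this
    simp only at this
    have hcz : c * z₁ = c * z₀ + (M + 1 - f z₀) := by
      rw [hz₁_def]; field_simp
    have hfz₁ : M + 1 ≤ f z₁ := by nlinarith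
    have := hfM z₁ (le_trans hz₀ hz₁ge)
    linarith
  -- deriv w z = 0 for z > 0
  have hpos' : ∀ z > (0:ℝ), deriv w z = 0 := by
    intro z hz
    have hev : g =ᶠ[nhds z] (fun _ => (0:ℝ)) := by
      filter_upwards [Ioi_mem_nhds hz] with t ht
      exact hgzero t (le_of_lt ht)
    have h1 : HasDerivAt g 0 z :=
      (hasDerivAt_const z (0:ℝ)).congr_of_eventuallyEq hev
    have h2 := (hg' z).unique h1
    have h3 : (0:ℝ) ≤ ⟪deriv (deriv w) z, w z⟫ := hpos z hz
    have h4 : ⟪deriv w z, deriv w z⟫ = ‖deriv w z‖ ^ 2 := real_inner_self_eq_norm_sq _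
    have h5 : ‖deriv w z‖ ^ 2 ≤ 0 := by nlinarith
    have : ‖deriv w z‖ = 0 := by nlinarith [norm_nonneg (deriv w z), sq_nonneg ‖deriv w z‖]
    exact norm_eq_zero.mp this
  intro z hz
  rcases eq_or_lt_of_le hz with rfl | h
  · -- z = 0 : use continuity
    have hcont : ContinuousAt (deriv w) 0 := hd2.continuous.continuousAt
    have ht1 : Filter.Tendsto (deriv w) (nhdsWithin 0 (Set.Ioi 0)) (nhds (deriv w 0)) :=
      hcont.continuousWithinAt.tendsto
    have ht2 : Filter.Tendsto (deriv w) (nhdsWithin 0 (Set.Ioi 0)) (nhds 0) := by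
      apply Filter.Tendsto.congr' _ tendsto_const_nhds
      filter_upwards [self_mem_nhdsWithin] with t ht
      exact (hpos' t ht).symm
    exact tendsto_nhds_unique ht1 ht2
  · exact hpos' z h
end

section
/- Let H be a real Hilbert space, v : (0,∞) → H twice differentiable with (v''(z), v(z))_H ≥ 0 for a.e. z > 0, (v'(z), v(z))_H ≤ 0 for all z ≥ 0, and v continuous at 0 with v, v' continuous on [0,∞). Then for all T > ε > 0: ∫_ε^T z‖v'(z)‖² dz ≤ T(v'(T), v(T)) − ε(v'(ε), v(ε)) + (1/2)‖v(ε)‖², and consequently ∫_0^∞ z‖v'(z)‖² dz ≤ (1/2)‖v(0)‖². -/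
open MeasureTheory RealInnerProductSpace Filter

/-- If `⟪v''(z), v(z)⟫ ≥ 0` a.e. on `(0,∞)`, `⟪v'(z), v(z)⟫ ≤ 0` for `z ≥ 0`, and
`v, v'` are continuous on `[0,∞)` with `v` twice differentiable on `(0,∞)`, then
`∫_ε^T z‖v'(z)‖² dz ≤ T⟪v'(T), v(T)⟫ - ε⟪v'(ε), v(ε)⟫ + ½‖v(ε)‖²` for `0 < ε < T`,
and `∫_0^∞ z‖v'(z)‖² dz ≤ ½‖v(0)‖²`. -/
theorem stmt19 {H : Type*} [NormedAddCommGroup H] [InnerProductSpace ℝ H] [CompleteSpace H]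
    (v : ℝ → H)
    (hv : ∀ z > (0:ℝ), DifferentiableAt ℝ v z)
    (hv' : ∀ z > (0:ℝ), DifferentiableAt ℝ (deriv v) z)
    (hcont : ContinuousOn v (Set.Ici (0:ℝ)))
    (hcont' : ContinuousOn (deriv v) (Set.Ici (0:ℝ)))
    (hsec : ∀ᵐ z ∂(volume.restrict (Set.Ioi (0:ℝ))), ⟪deriv (deriv v) z, v z⟫ ≥ (0:ℝ))
    (hfirst : ∀ z ≥ (0:ℝ), ⟪deriv v z, v z⟫ ≤ 0)
    (hInt : ∀ ε T : ℝ, 0 < ε →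
      IntervalIntegrable (fun z => z * ⟪deriv (deriv v) z, v z⟫) volume ε T) :
    (∀ ε T : ℝ, 0 < ε → ε < T →
      (∫ z in ε..T, z * ‖deriv v z‖ ^ 2) ≤
        T * ⟪deriv v T, v T⟫ - ε * ⟪deriv v ε, v ε⟫ + (1/2) * ‖v ε‖ ^ 2) ∧
    (∫⁻ z in Set.Ioi (0:ℝ), ENNReal.ofReal (z * ‖deriv v z‖ ^ 2)) ≤
      ENNReal.ofReal ((1/2) * ‖v 0‖ ^ 2) := by
  have key : ∀ ε T : ℝ, 0 < ε → ε < T →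
      (∫ z in ε..T, z * ‖deriv v z‖ ^ 2) ≤
        T * ⟪deriv v T, v T⟫ - ε * ⟪deriv v ε, v ε⟫ + (1/2) * ‖v ε‖ ^ 2 := by
    intro ε T hε hεT
    have hle : ε ≤ T := hεT.le
    have huIcc : Set.uIcc ε T = Set.Icc ε T := Set.uIcc_of_le hle
    have hsub : Set.Icc ε T ⊆ Set.Ici (0:ℝ) := fun x hx => le_trans hε.le hx.1
    have hcv : ContinuousOn v (Set.Icc ε T) := hcont.mono hsub
    have hcv' : ContinuousOn (deriv v) (Set.Icc ε T) := hcont'.mono hsub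
    have hF : ∀ z ∈ Set.uIcc ε T,
        HasDerivAt (fun z => z * ⟪deriv v z, v z⟫)
          (⟪deriv v z, v z⟫ + z * ⟪deriv (deriv v) z, v z⟫ + z * ‖deriv v z‖ ^ 2) z := by
      intro z hz
      rw [huIcc] at hz
      have hz0 : 0 < z := lt_of_lt_of_le hε hz.1
      have h1 : HasDerivAt v (deriv v z) z := (hv z hz0).hasDerivAt
      have h2 : HasDerivAt (deriv v) (deriv (deriv v) z) z := (hv' z hz0).hasDerivAt
      have hinner := h2.inner ℝ h1
      have hmul := (hasDerivAt_id z).mul hinner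
      refine hmul.congr_deriv ?_
      rw [← real_inner_self_eq_norm_sq]
      simp only [id_eq]
      ring
    have hi1 : IntervalIntegrable (fun z => ⟪deriv v z, v z⟫) volume ε T := by
      apply ContinuousOn.intervalIntegrable
      rw [huIcc]; exact hcv'.inner hcv
    have hi2 : IntervalIntegrable (fun z => z * ⟪deriv (deriv v) z, v z⟫) volume ε T :=
      hInt ε T hε
    have hi3 : IntervalIntegrable (fun z => z * ‖deriv v z‖ ^ 2) volume ε T := by
      apply ContinuousOn.intervalIntegrable
      rw [huIcc]
      exact continuousOn_id.mul (hcv'.norm.pow 2)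
    have hFTC : (∫ z in ε..T,
        (⟪deriv v z, v z⟫ + z * ⟪deriv (deriv v) z, v z⟫ + z * ‖deriv v z‖ ^ 2))
        = T * ⟪deriv v T, v T⟫ - ε * ⟪deriv v ε, v ε⟫ :=
      intervalIntegral.integral_eq_sub_of_hasDerivAt hF ((hi1.add hi2).add hi3)
    rw [intervalIntegral.integral_add (hi1.add hi2) hi3,
        intervalIntegral.integral_add hi1 hi2] at hFTC
    have hG : ∀ z ∈ Set.uIcc ε T,
        HasDerivAt (fun z => (1/2 : ℝ) * ⟪v z, v z⟫) (⟪deriv v z, v z⟫) z := by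
      intro z hz
      rw [huIcc] at hz
      have hz0 : 0 < z := lt_of_lt_of_le hε hz.1
      have h1 : HasDerivAt v (deriv v z) z := (hv z hz0).hasDerivAt
      have := (h1.inner ℝ h1).const_mul (1/2 : ℝ)
      refine this.congr_deriv ?_
      rw [real_inner_comm (v z) (deriv v z)]
      ring
    have hGint : (∫ z in ε..T, ⟪deriv v z, v z⟫)
        = (1/2 : ℝ) * ⟪v T, v T⟫ - (1/2 : ℝ) * ⟪v ε, v ε⟫ :=
      intervalIntegral.integral_eq_sub_of_hasDerivAt hG hi1
    have hmid : 0 ≤ ∫ z in ε..T, z * ⟪deriv (deriv v) z, v z⟫ := by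
      apply intervalIntegral.integral_nonneg_of_ae_restrict hle
      have hsub' : Set.Icc ε T ⊆ Set.Ioi (0:ℝ) := fun x hx => lt_of_lt_of_le hε hx.1
      have h1 : ∀ᵐ z ∂(volume.restrict (Set.Icc ε T)), ⟪deriv (deriv v) z, v z⟫ ≥ (0:ℝ) :=
        ae_restrict_of_ae_restrict_of_subset hsub' hsec
      have h2 : ∀ᵐ z ∂(volume.restrict (Set.Icc ε T)), z ∈ Set.Icc ε T :=
        ae_restrict_mem measurableSet_Icc
      filter_upwards [h1, h2] with z h1z h2z
      exact mul_nonneg (le_trans hε.le h2z.1) h1z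
    have hvT : (0:ℝ) ≤ ⟪v T, v T⟫ := real_inner_self_nonneg
    have e1 : ⟪v ε, v ε⟫ = ‖v ε‖ ^ 2 := real_inner_self_eq_norm_sq _
    rw [hGint] at hFTC
    linarith
  refine ⟨key, ?_⟩
  set g : ℝ → ENNReal := fun z => ENNReal.ofReal (z * ‖deriv v z‖ ^ 2) with hgdef
  -- bound the integral over any Ioc a b, 0 < a < b
  have hbound : ∀ a b : ℝ, 0 < a → a < b →
      (∫⁻ z in Set.Ioc a b, g z) ≤
        ENNReal.ofReal (-(a * ⟪deriv v a, v a⟫) + (1/2) * ‖v a‖ ^ 2) := by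
    intro a b ha hab
    have hsub : Set.Icc a b ⊆ Set.Ici (0:ℝ) := fun x hx => le_trans ha.le hx.1
    have hi3 : IntervalIntegrable (fun z => z * ‖deriv v z‖ ^ 2) volume a b := by
      apply ContinuousOn.intervalIntegrable
      rw [Set.uIcc_of_le hab.le]
      exact continuousOn_id.mul ((hcont'.mono hsub).norm.pow 2)
    have hint3 : IntegrableOn (fun z => z * ‖deriv v z‖ ^ 2) (Set.Ioc a b) volume := hi3.1
    have hnn : 0 ≤ᵐ[volume.restrict (Set.Ioc a b)] fun z => z * ‖deriv v z‖ ^ 2 := by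
      filter_upwards [ae_restrict_mem measurableSet_Ioc] with z hz
      have : (0:ℝ) ≤ z := le_trans ha.le hz.1.le
      positivity
    rw [hgdef]
    rw [← ofReal_integral_eq_lintegral_ofReal hint3 hnn]
    apply ENNReal.ofReal_le_ofReal
    have hk := key a b ha hab
    rw [intervalIntegral.integral_of_le hab.le] at hk
    have hb0 : (0:ℝ) ≤ b := le_trans ha.le hab.le
    have hT : b * ⟪deriv v b, v b⟫ ≤ 0 :=
      mul_nonpos_of_nonneg_of_nonpos hb0 (hfirst b hb0)
    linarith
  -- exhaust `Ioi 0` by the monotone family `Ioc (n+1)⁻¹ (n+2)`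
  have hmono : Monotone (fun n : ℕ => Set.Ioc (((n:ℝ)+1)⁻¹) ((n:ℝ)+2)) := by
    intro n m hnm
    have hnm' : ((n:ℝ)) ≤ (m:ℝ) := Nat.cast_le.mpr hnm
    apply Set.Ioc_subset_Ioc
    · apply inv_anti₀ (by positivity)
      linarith
    · linarith
  have hUnion : (⋃ n : ℕ, Set.Ioc (((n:ℝ)+1)⁻¹) ((n:ℝ)+2)) = Set.Ioi 0 := by
    ext x
    simp only [Set.mem_iUnion, Set.mem_Ioc, Set.mem_Ioi]
    constructor
    · rintro ⟨n, h1, _⟩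
      exact lt_trans (by positivity) h1
    · intro hx
      obtain ⟨n, hn⟩ := exists_nat_gt (max x⁻¹ x)
      refine ⟨n, ?_, ?_⟩
      · have h1 : x⁻¹ < (n:ℝ) + 1 := by
          have := le_max_left x⁻¹ x
          linarith
        have h2 : (0:ℝ) < x⁻¹ := inv_pos.mpr hx
        calc (((n:ℝ)+1))⁻¹ < (x⁻¹)⁻¹ := by
              exact inv_strictAnti₀ h2 h1
          _ = x := inv_inv x
      · have := le_max_right x⁻¹ x
        linarith
  -- the bounds converge to ½‖v 0‖²
  have ha_tendsto : Tendsto (fun n : ℕ => (((n:ℝ)+1))⁻¹) atTop (nhds 0) := by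
    have := tendsto_one_div_add_atTop_nhds_zero_nat (𝕜 := ℝ)
    simpa [one_div] using this
  have ha_mem : ∀ n : ℕ, (((n:ℝ)+1))⁻¹ ∈ Set.Ici (0:ℝ) := fun n => Set.mem_Ici.mpr (by positivity)
  have ha_within : Tendsto (fun n : ℕ => (((n:ℝ)+1))⁻¹) atTop (nhdsWithin 0 (Set.Ici (0:ℝ))) :=
    tendsto_nhdsWithin_of_tendsto_nhds_of_eventually_within _ ha_tendsto
      (Eventually.of_forall ha_mem)
  have hv0 : Tendsto (fun n : ℕ => v ((((n:ℝ)+1))⁻¹)) atTop (nhds (v 0)) :=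
    (hcont 0 Set.self_mem_Ici).tendsto.comp ha_within
  have hv'0 : Tendsto (fun n : ℕ => deriv v ((((n:ℝ)+1))⁻¹)) atTop (nhds (deriv v 0)) :=
    (hcont' 0 Set.self_mem_Ici).tendsto.comp ha_within
  have hC : Tendsto (fun n : ℕ =>
      -((((n:ℝ)+1))⁻¹ * ⟪deriv v ((((n:ℝ)+1))⁻¹), v ((((n:ℝ)+1))⁻¹)⟫)
        + (1/2) * ‖v ((((n:ℝ)+1))⁻¹)‖ ^ 2) atTop (nhds ((1/2) * ‖v 0‖ ^ 2)) := by
    have hinner : Tendsto (fun n : ℕ =>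
        ⟪deriv v ((((n:ℝ)+1))⁻¹), v ((((n:ℝ)+1))⁻¹)⟫) atTop (nhds ⟪deriv v 0, v 0⟫) :=
      hv'0.inner hv0
    have h1 : Tendsto (fun n : ℕ =>
        -((((n:ℝ)+1))⁻¹ * ⟪deriv v ((((n:ℝ)+1))⁻¹), v ((((n:ℝ)+1))⁻¹)⟫)) atTop (nhds 0) := by
      have := (ha_tendsto.mul hinner).neg
      simpa using this
    have h2 : Tendsto (fun n : ℕ => (1/2 : ℝ) * ‖v ((((n:ℝ)+1))⁻¹)‖ ^ 2) atTop
        (nhds ((1/2) * ‖v 0‖ ^ 2)) := ((hv0.norm.pow 2).const_mul _)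
    simpa using h1.add h2
  have hC' : Tendsto (fun n : ℕ => ENNReal.ofReal
      (-((((n:ℝ)+1))⁻¹ * ⟪deriv v ((((n:ℝ)+1))⁻¹), v ((((n:ℝ)+1))⁻¹)⟫)
        + (1/2) * ‖v ((((n:ℝ)+1))⁻¹)‖ ^ 2)) atTop
      (nhds (ENNReal.ofReal ((1/2) * ‖v 0‖ ^ 2))) :=
    (ENNReal.continuous_ofReal.tendsto _).comp hC
  -- put things together using the measure `volume.withDensity g`
  have happ : ∀ s : Set ℝ, MeasurableSet s → (volume.withDensity g) s = ∫⁻ z in s, g z :=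
    fun s hs => withDensity_apply g hs
  calc (∫⁻ z in Set.Ioi (0:ℝ), g z) = (volume.withDensity g) (Set.Ioi 0) :=
        (happ _ measurableSet_Ioi).symm
    _ = (volume.withDensity g) (⋃ n : ℕ, Set.Ioc (((n:ℝ)+1)⁻¹) ((n:ℝ)+2)) := by rw [hUnion]
    _ = ⨆ n : ℕ, (volume.withDensity g) (Set.Ioc (((n:ℝ)+1)⁻¹) ((n:ℝ)+2)) :=
        hmono.directed_le.measure_iUnion
    _ ≤ ENNReal.ofReal ((1/2) * ‖v 0‖ ^ 2) := by
        apply iSup_le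
        intro n
        refine ge_of_tendsto hC' ?_
        filter_upwards [eventually_ge_atTop n] with m hm
        calc (volume.withDensity g) (Set.Ioc (((n:ℝ)+1)⁻¹) ((n:ℝ)+2))
            ≤ (volume.withDensity g) (Set.Ioc (((m:ℝ)+1)⁻¹) ((m:ℝ)+2)) :=
              measure_mono (hmono hm)
          _ = ∫⁻ z in Set.Ioc (((m:ℝ)+1)⁻¹) ((m:ℝ)+2), g z := happ _ measurableSet_Ioc
          _ ≤ ENNReal.ofReal
              (-((((m:ℝ)+1))⁻¹ * ⟪deriv v ((((m:ℝ)+1))⁻¹), v ((((m:ℝ)+1))⁻¹)⟫)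
                + (1/2) * ‖v ((((m:ℝ)+1))⁻¹)‖ ^ 2) := by
              apply hbound
              · positivity
              · have h1 : (((m:ℝ)+1))⁻¹ ≤ 1 := by
                  rw [inv_le_one_iff₀]
                  right; linarith [Nat.cast_nonneg (α := ℝ) m]
                linarith [Nat.cast_nonneg (α := ℝ) m]
end
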